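/- Let 𝒳, 𝒴 be finite nonempty sets, Q a full-support pmf on 𝒳, W a channel from 𝒳 to 𝒴 with W(y|x) > 0 for all x,y, V a full-support pmf on 𝒴, and ρ ∈ [0,1]. Then the infimum over all pmfs P̂ on 𝒳×𝒴 of D(P̂ ‖ Q·W) + ρ·D(P̂ ‖ Q⊗V) equals −(1+ρ)·log ∑_{x,y} Q(x) W(y|x)^{1/(1+ρ)} V(y)^{ρ/(1+ρ)}, and it is attained at the pmf P̂*(x,y) = Q(x)W(y|x)^{1/(1+ρ)}V(y)^{ρ/(1+ρ)} / ∑_{x',y'} Q(x')W(y'|x')^{1/(1+ρ)}V(y')^{ρ/(1+ρ)}. -/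
import Mathlib


open Real BigOperators

/-- A probability mass function on a finite alphabet. -/
def IsPmf {α : Type*} [Fintype α] (p : α → ℝ) : Prop :=
  (∀ a, 0 ≤ p a) ∧ ∑ a, p a = 1

/-- Relative entropy `D(p‖q) = ∑ p log (p/q)` (natural log, `0 log 0 = 0`). -/
noncomputable def klDiv {α : Type*} [Fintype α] (p q : α → ℝ) : ℝ :=
  ∑ a, p a * Real.log (p a / q a)

/-- for full-support `Q` on `X`, a strictly positive channel `W` from `X`
to `Y`, a full-support pmf `V` on `Y`, and `ρ ∈ [0,1]`, the infimum over pmfs `P̂` on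
`X × Y` of `D(P̂‖Q·W) + ρ D(P̂‖Q⊗V)` equals
`−(1+ρ) log ∑_{x,y} Q x (W x y)^{1/(1+ρ)} (V y)^{ρ/(1+ρ)}`, attained at
`P̂*(x,y) = Q x (W x y)^{1/(1+ρ)} (V y)^{ρ/(1+ρ)} / (normalization)`. -/
theorem stmt3 {X Y : Type*} [Fintype X] [Fintype Y] [Nonempty X] [Nonempty Y]
    (Q : X → ℝ) (hQ : IsPmf Q) (hQpos : ∀ x, 0 < Q x)
    (W : X → Y → ℝ) (hW : ∀ x, (∀ y, 0 ≤ W x y) ∧ ∑ y, W x y = 1)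
    (hWpos : ∀ x y, 0 < W x y)
    (V : Y → ℝ) (hV : IsPmf V) (hVpos : ∀ y, 0 < V y)
    (ρ : ℝ) (hρ : ρ ∈ Set.Icc (0:ℝ) 1) :
    IsLeast
      {v : ℝ | ∃ P : X × Y → ℝ, IsPmf P ∧
        v = klDiv P (fun a => Q a.1 * W a.1 a.2)
            + ρ * klDiv P (fun a => Q a.1 * V a.2)}
      (-(1 + ρ) * Real.log
        (∑ a : X × Y, Q a.1 * (W a.1 a.2) ^ (1 / (1 + ρ)) * (V a.2) ^ (ρ / (1 + ρ))))
    ∧ IsPmf (fun a : X × Y =>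
        Q a.1 * (W a.1 a.2) ^ (1 / (1 + ρ)) * (V a.2) ^ (ρ / (1 + ρ))
          / ∑ b : X × Y, Q b.1 * (W b.1 b.2) ^ (1 / (1 + ρ)) * (V b.2) ^ (ρ / (1 + ρ)))
    ∧ (klDiv
        (fun a : X × Y =>
          Q a.1 * (W a.1 a.2) ^ (1 / (1 + ρ)) * (V a.2) ^ (ρ / (1 + ρ))
            / ∑ b : X × Y, Q b.1 * (W b.1 b.2) ^ (1 / (1 + ρ)) * (V b.2) ^ (ρ / (1 + ρ)))
        (fun a => Q a.1 * W a.1 a.2)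
      + ρ * klDiv
        (fun a : X × Y =>
          Q a.1 * (W a.1 a.2) ^ (1 / (1 + ρ)) * (V a.2) ^ (ρ / (1 + ρ))
            / ∑ b : X × Y, Q b.1 * (W b.1 b.2) ^ (1 / (1 + ρ)) * (V b.2) ^ (ρ / (1 + ρ)))
        (fun a => Q a.1 * V a.2)
      = -(1 + ρ) * Real.log
          (∑ a : X × Y, Q a.1 * (W a.1 a.2) ^ (1 / (1 + ρ)) * (V a.2) ^ (ρ / (1 + ρ)))) := by
  obtain ⟨hρ0, hρ1⟩ := hρ
  have h1ρ : (0:ℝ) < 1 + ρ := by linarith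
  set g : X × Y → ℝ := fun a => Q a.1 * (W a.1 a.2) ^ (1 / (1 + ρ)) * (V a.2) ^ (ρ / (1 + ρ))
    with hg
  have hgpos : ∀ a, 0 < g a := fun a =>
    mul_pos (mul_pos (hQpos _) (Real.rpow_pos_of_pos (hWpos _ _) _))
      (Real.rpow_pos_of_pos (hVpos _) _)
  set Z : ℝ := ∑ a : X × Y, g a with hZ
  have hZpos : 0 < Z := Finset.sum_pos (fun a _ => hgpos a) Finset.univ_nonempty
  set Ps : X × Y → ℝ := fun a => g a / Z with hPs
  have hPspos : ∀ a, 0 < Ps a := fun a => div_pos (hgpos a) hZpos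
  have hPsum : ∑ a, Ps a = 1 := by
    rw [hPs]
    rw [← Finset.sum_div, ← hZ, div_self hZpos.ne']
  have hPspmf : IsPmf Ps := ⟨fun a => (hPspos a).le, hPsum⟩
  have key : ∀ P : X × Y → ℝ, IsPmf P →
      klDiv P (fun a => Q a.1 * W a.1 a.2) + ρ * klDiv P (fun a => Q a.1 * V a.2)
      = (1 + ρ) * klDiv P Ps + (-(1 + ρ) * Real.log Z) := by
    intro P hP
    have hsum := hP.2
    have hconst : (-(1 + ρ) * Real.log Z) = ∑ a, (-(1 + ρ) * Real.log Z) * P a := by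
      rw [← Finset.mul_sum, hsum, mul_one]
    rw [hconst]
    unfold klDiv
    rw [Finset.mul_sum, Finset.mul_sum, ← Finset.sum_add_distrib, ← Finset.sum_add_distrib]
    apply Finset.sum_congr rfl
    intro a _
    rcases eq_or_lt_of_le (hP.1 a) with h0 | hpa
    · simp [← h0]
    · have hw := hWpos a.1 a.2
      have hv := hVpos a.2
      have hq := hQpos a.1
      have e1 : Real.log (P a / (Q a.1 * W a.1 a.2))
          = Real.log (P a) - (Real.log (Q a.1) + Real.log (W a.1 a.2)) := by
        rw [Real.log_div hpa.ne' (by positivity), Real.log_mul hq.ne' hw.ne']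
      have e2 : Real.log (P a / (Q a.1 * V a.2))
          = Real.log (P a) - (Real.log (Q a.1) + Real.log (V a.2)) := by
        rw [Real.log_div hpa.ne' (by positivity), Real.log_mul hq.ne' hv.ne']
      have e3 : Real.log (P a / Ps a)
          = Real.log (P a) - (Real.log (Q a.1) + (1 / (1 + ρ)) * Real.log (W a.1 a.2)
              + (ρ / (1 + ρ)) * Real.log (V a.2) - Real.log Z) := by
        have hps : Ps a = g a / Z := by rw [hPs]
        rw [hps, Real.log_div hpa.ne' (div_pos (hgpos a) hZpos).ne',
            Real.log_div (hgpos a).ne' hZpos.ne', hg]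
        simp only
        rw [Real.log_mul (by positivity) (Real.rpow_pos_of_pos hv _).ne',
            Real.log_mul hq.ne' (Real.rpow_pos_of_pos hw _).ne',
            Real.log_rpow hw, Real.log_rpow hv]
      rw [e1, e2, e3]
      have hc1 : (1 + ρ) * (1 / (1 + ρ)) = 1 := by field_simp
      have hc2 : (1 + ρ) * (ρ / (1 + ρ)) = ρ := by field_simp
      linear_combination (P a * Real.log (W a.1 a.2)) * hc1
        + (P a * Real.log (V a.2)) * hc2
  have gibbs : ∀ P : X × Y → ℝ, IsPmf P → 0 ≤ klDiv P Ps := by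
    intro P hP
    have hle : ∑ a, (P a - Ps a) ≤ ∑ a, P a * Real.log (P a / Ps a) := by
      apply Finset.sum_le_sum
      intro a _
      rcases eq_or_lt_of_le (hP.1 a) with h0 | hpa
      · rw [← h0, zero_mul, zero_sub, neg_nonpos]
        exact (hPspos a).le
      · have h := Real.log_le_sub_one_of_pos (div_pos (hPspos a) hpa)
        have h2 : Real.log (P a / Ps a) = - Real.log (Ps a / P a) := by
          rw [← Real.log_inv, inv_div]
        have h3 : P a * (Ps a / P a - 1) = Ps a - P a := by field_simp
        have h4 := mul_le_mul_of_nonneg_left h hpa.le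
        rw [h3] at h4
        nlinarith [h4]
    have : ∑ a, (P a - Ps a) = 0 := by
      rw [Finset.sum_sub_distrib, hP.2, hPsum]
      ring
    unfold klDiv
    linarith [hle, this]
  have hself : klDiv Ps Ps = 0 := by
    unfold klDiv
    apply Finset.sum_eq_zero
    intro a _
    rw [div_self (hPspos a).ne', Real.log_one, mul_zero]
  have hval : klDiv Ps (fun a => Q a.1 * W a.1 a.2) + ρ * klDiv Ps (fun a => Q a.1 * V a.2)
      = -(1 + ρ) * Real.log Z := by
    rw [key Ps hPspmf, hself]
    ring
  refine ⟨⟨⟨Ps, hPspmf, hval.symm⟩, ?_⟩, hPspmf, hval⟩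
  rintro v ⟨P, hP, rfl⟩
  rw [key P hP]
  nlinarith [gibbs P hP, h1ρ]
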